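/- Let σ ∈ Aut_F(A) where A = F[x]/(x^n−1), char(F) ∤ n, and write a = σ(x). Then the constant coefficient of a^i is zero for every i with 1 ≤ i ≤ n−1. (Proof idea: M_{a^i} has characteristic polynomial (X^{n~}−1)^d where d = gcd(i,n), n~ = n/d, so its trace is 0, and trace(M_{a^i}) = n·[a^i]_0.) -/

import Mathlib

open Polynomial

section Aux

variable {F : Type} [Field F]

lemma aux_monic {n : ℕ} (hn : 0 < n) : ((X : F[X]) ^ n - 1).Monic := by
  simpa using monic_X_pow_sub_C (1 : F) hn.ne'

lemma aux_Xpow_mod {n : ℕ} (hn : 0 < n) (m : ℕ) :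
    (X : F[X]) ^ m %ₘ (X ^ n - 1) = X ^ (m % n) := by
  have hm := aux_monic (F := F) hn
  have hdvd : (X ^ n - 1 : F[X]) ∣ X ^ m - X ^ (m % n) := by
    have h1 : (X ^ n - 1 : F[X]) ∣ (X ^ n) ^ (m / n) - 1 := by
      simpa using sub_dvd_pow_sub_pow ((X : F[X]) ^ n) 1 (m / n)
    have h2 : (X : F[X]) ^ m - X ^ (m % n)
        = ((X ^ n) ^ (m / n) - 1) * X ^ (m % n) := by
      rw [sub_mul, one_mul, ← pow_mul, ← pow_add, Nat.div_add_mod]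
    rw [h2]
    exact h1.mul_right _
  have key : (X : F[X]) ^ m %ₘ (X ^ n - 1)
      = (X ^ m - X ^ (m % n) : F[X]) %ₘ (X ^ n - 1) + X ^ (m % n) %ₘ (X ^ n - 1) := by
    rw [← add_modByMonic, sub_add_cancel]
  rw [key, (modByMonic_eq_zero_iff_dvd hm).mpr hdvd, zero_add,
    (modByMonic_eq_self_iff hm).mpr]
  rw [degree_X_pow]
  have : degree ((X : F[X]) ^ n - 1) = n := by
    simpa using degree_X_pow_sub_C hn (1 : F)
  rw [this]
  exact_mod_cast Nat.mod_lt m hn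

lemma aux_coeff_shift {n : ℕ} (hn : 0 < n) (q : F[X]) {j : ℕ} (hj : j < n) :
    ((q * X ^ j) %ₘ (X ^ n - 1)).coeff j = (q %ₘ (X ^ n - 1)).coeff 0 := by
  have hm := aux_monic (F := F) hn
  set r := q %ₘ (X ^ n - 1) with hr
  have hqr : (q * X ^ j) %ₘ (X ^ n - 1) = (r * X ^ j) %ₘ (X ^ n - 1) := by
    have hdvd : (X ^ n - 1 : F[X]) ∣ q * X ^ j - r * X ^ j := by
      rw [← sub_mul]
      exact Dvd.dvd.mul_right (by
        rw [hr, modByMonic_eq_sub_mul_div _ _, sub_sub_cancel]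
        exact dvd_mul_right _ _) _
    have hz := (modByMonic_eq_zero_iff_dvd hm).mpr hdvd
    have h2 : (q * X ^ j) %ₘ (X ^ n - 1)
        = (q * X ^ j - r * X ^ j) %ₘ (X ^ n - 1) + (r * X ^ j) %ₘ (X ^ n - 1) := by
      rw [← add_modByMonic, sub_add_cancel]
    rw [h2, hz, zero_add]
  rw [hqr]
  have hdeg : r.natDegree < n := by
    rcases eq_or_ne r 0 with h0 | h0
    · rw [h0]; simpa using hn
    · have h1 : r.degree < (X ^ n - 1 : F[X]).degree := degree_modByMonic_lt _ hm
      have h2 : degree ((X : F[X]) ^ n - 1) = n := by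
        simpa using degree_X_pow_sub_C hn (1 : F)
      rw [h2] at h1
      exact (natDegree_lt_iff_degree_lt h0).mpr h1
  have hrsum : r = ∑ k ∈ Finset.range n, (r.coeff k) • (X : F[X]) ^ k := by
    conv_lhs => rw [r.as_sum_range' n hdeg]
    refine Finset.sum_congr rfl fun k _ => ?_
    rw [smul_eq_C_mul, C_mul_X_pow_eq_monomial]
  have hsum : (∑ k ∈ Finset.range n, (r.coeff k) • ((X : F[X]) ^ (k + j)))
        %ₘ ((X : F[X]) ^ n - 1)
      = ∑ k ∈ Finset.range n, (r.coeff k) • ((X : F[X]) ^ (k + j) %ₘ (X ^ n - 1)) := by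
    show Polynomial.modByMonicHom _ _ = _
    rw [map_sum]
    exact Finset.sum_congr rfl fun k _ => by rw [LinearMap.map_smul]; rfl
  calc ((r * X ^ j) %ₘ (X ^ n - 1)).coeff j
      = ((∑ k ∈ Finset.range n, (r.coeff k) • ((X : F[X]) ^ (k + j)))
          %ₘ ((X : F[X]) ^ n - 1)).coeff j := by
        congr 2
        conv_lhs => rw [hrsum, Finset.sum_mul]
        exact Finset.sum_congr rfl fun k _ => by rw [smul_mul_assoc, ← pow_add]
    _ = ∑ k ∈ Finset.range n, (r.coeff k) * ((X : F[X]) ^ ((k + j) % n)).coeff j := by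
        rw [hsum, finset_sum_coeff]
        refine Finset.sum_congr rfl fun k _ => ?_
        rw [aux_Xpow_mod hn, coeff_smul, smul_eq_mul]
    _ = r.coeff 0 := by
        rw [Finset.sum_eq_single 0]
        · simp [Nat.mod_eq_of_lt hj]
        · intro k hk hk0
          have hk' : k < n := Finset.mem_range.mp hk
          rw [coeff_X_pow, if_neg, mul_zero]
          intro hkj
          rcases lt_or_ge (k + j) n with h | h
          · rw [Nat.mod_eq_of_lt h] at hkj; omega
          · have hmod : (k + j) % n = k + j - n := by
              rw [Nat.mod_eq_sub_mod h, Nat.mod_eq_of_lt (by omega)]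
            rw [hmod] at hkj; omega
        · intro h0
          exact absurd (Finset.mem_range.mpr hn) h0

end Aux

lemma aux_trace {F : Type} [Field F] {n : ℕ} (hn : 0 < n) (q : F[X]) :
    Algebra.trace F (AdjoinRoot ((X : F[X]) ^ n - 1)) (AdjoinRoot.mk _ q)
      = n * (q %ₘ (X ^ n - 1)).coeff 0 := by
  have hm := aux_monic (F := F) hn
  have hd : ((X : F[X]) ^ n - 1).natDegree = n := by
    simpa using natDegree_X_pow_sub_C (n := n) (r := (1 : F))
  set pb := AdjoinRoot.powerBasis' hm with hpb
  rw [Algebra.trace_eq_matrix_trace pb.basis, Matrix.trace]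
  have hdiag : ∀ jj : Fin pb.dim,
      (Algebra.leftMulMatrix pb.basis (AdjoinRoot.mk _ q)).diag jj
        = (q %ₘ ((X : F[X]) ^ n - 1)).coeff 0 := by
    intro jj
    have hjj : (jj : ℕ) < n := by
      have := jj.isLt
      simpa [hpb, hd] using this
    have hb : pb.basis jj = AdjoinRoot.mk ((X : F[X]) ^ n - 1) (X ^ (jj : ℕ)) := by
      rw [pb.basis_eq_pow]
      show AdjoinRoot.root ((X : F[X]) ^ n - 1) ^ (jj : ℕ) = _
      rw [← AdjoinRoot.mk_X, ← map_pow]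
    rw [Matrix.diag_apply, Algebra.leftMulMatrix_eq_repr_mul, hb, ← map_mul]
    have : pb.basis.repr (AdjoinRoot.mk ((X : F[X]) ^ n - 1) (q * X ^ (jj : ℕ))) jj
        = ((q * X ^ (jj : ℕ)) %ₘ ((X : F[X]) ^ n - 1)).coeff jj := by
      show (AdjoinRoot.powerBasisAux' hm).repr _ _ = _
      exact congrArg (fun f => Polynomial.coeff f (jj : ℕ)) (AdjoinRoot.modByMonicHom_mk hm _)
    rw [this, aux_coeff_shift hn q hjj]
  rw [Finset.sum_congr rfl (fun jj _ => hdiag jj), Finset.sum_const, Finset.card_univ,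
    Fintype.card_fin, nsmul_eq_mul]
  congr 1
  simp [hpb, hd]

/-- A = F[x]/(x^n − 1). -/
abbrev Amod (F : Type) [Field F] (n : ℕ) : Type :=
  Polynomial F ⧸ (Ideal.span {Polynomial.X ^ n - 1} : Ideal (Polynomial F))

/-- the class of x in A. -/
noncomputable def xbar (F : Type) [Field F] (n : ℕ) : Amod F n :=
  Ideal.Quotient.mk _ Polynomial.X

/-- with a = σ(x), the constant coefficient of a^i is zero for 1 ≤ i ≤ n−1,
where the coefficients are read off from the canonical representative of degree < n. -/
theorem stmt_16 (F : Type) [Field F] (n : ℕ) (hn : 0 < n)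
    (hchar : ¬ (ringChar F ∣ n))
    (σ : Amod F n ≃ₐ[F] Amod F n) (i : ℕ) (h1 : 1 ≤ i) (h2 : i ≤ n - 1)
    (p : Polynomial F)
    (hp : Ideal.Quotient.mk (Ideal.span {Polynomial.X ^ n - 1} : Ideal (Polynomial F)) p
        = (σ (xbar F n)) ^ i) :
    (p %ₘ (Polynomial.X ^ n - 1)).coeff 0 = 0 := by
  have hi : i < n := by omega
  have hcast : (n : F) ≠ 0 := fun h => hchar (ringChar.dvd h)
  have h1' : Algebra.trace F (Amod F n)
        (Ideal.Quotient.mk (Ideal.span {Polynomial.X ^ n - 1} : Ideal (Polynomial F)) p)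
      = n * ((p %ₘ (X ^ n - 1)).coeff 0) := aux_trace hn p
  have h2' : Algebra.trace F (Amod F n)
        (Ideal.Quotient.mk (Ideal.span {Polynomial.X ^ n - 1} : Ideal (Polynomial F))
          ((X : F[X]) ^ i))
      = n * (((X : F[X]) ^ i %ₘ (X ^ n - 1)).coeff 0) := aux_trace hn _
  have hx : (xbar F n) ^ i
      = Ideal.Quotient.mk (Ideal.span {Polynomial.X ^ n - 1} : Ideal (Polynomial F))
          ((X : F[X]) ^ i) := by
    rw [xbar, ← map_pow]
  have htr : Algebra.trace F (Amod F n) ((σ (xbar F n)) ^ i)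
      = Algebra.trace F (Amod F n) ((xbar F n) ^ i) := by
    rw [← map_pow]; exact Algebra.trace_eq_of_algEquiv σ _
  have hXi : (((X : F[X]) ^ i) %ₘ (X ^ n - 1)).coeff 0 = 0 := by
    rw [aux_Xpow_mod hn, Nat.mod_eq_of_lt hi, coeff_X_pow, if_neg (by omega)]
  have hz : (n : F) * (p %ₘ (X ^ n - 1)).coeff 0 = 0 := by
    rw [← h1', hp, htr, hx, h2', hXi, mul_zero]
  exact (mul_eq_zero.mp hz).resolve_left hcast
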